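/- For positive reals x_1,...,x_n in (0,1/2] and weights μ_1,...,μ_n ≥ 0 with Σμ_i = 1, let A_n = Σμ_i x_i, G_n = Π x_i^{μ_i}, and A'_n, G'_n the corresponding means of x'_i = 1 - x_i. Then A'_n - G'_n ≤ A_n - G_n. -/

import Mathlib

open Real

/-- For `1 ≤ u`: `2 u log u ≤ u² - 1`. -/
lemma kf_ineq_I {u : ℝ} (h : 1 ≤ u) : 2*u*Real.log u ≤ u^2 - 1 := by
  have hu0 : (0:ℝ) < u := lt_of_lt_of_le one_pos h
  -- f t = (exp t - exp (-t))/2 - t is monotone, f 0 = 0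
  set f : ℝ → ℝ := fun t => (Real.exp t - Real.exp (-t))/2 - t with hf
  have hd : ∀ t : ℝ, HasDerivAt f ((Real.exp t + Real.exp (-t))/2 - 1) t := by
    intro t
    have h1 : HasDerivAt (fun s : ℝ => Real.exp (-s)) (-Real.exp (-t)) t := by
      simpa [Function.comp_def] using (Real.hasDerivAt_exp (-t)).comp t ((hasDerivAt_id t).neg)
    have h2 := (((Real.hasDerivAt_exp t).sub h1).div_const 2).sub (hasDerivAt_id t)
    exact h2.congr_deriv (by ring)
  have hmono : Monotone f := by
    apply monotone_of_deriv_nonneg (fun t => (hd t).differentiableAt)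
    intro t
    rw [(hd t).deriv, Real.exp_neg]
    have hp := Real.exp_pos t
    have h6 : 0 ≤ (Real.exp t - 1)^2 / Real.exp t := by positivity
    have h7 : (Real.exp t - 1)^2 / Real.exp t = Real.exp t + (Real.exp t)⁻¹ - 2 := by
      field_simp <;> ring
    linarith
  have h0 : f 0 ≤ f (Real.log u) := hmono (Real.log_nonneg h)
  have hfl : f (Real.log u) = (u - u⁻¹)/2 - Real.log u := by
    simp [hf, Real.exp_log hu0, Real.exp_neg, Real.exp_log hu0]
  have hf0 : f 0 = 0 := by simp [hf]
  rw [hf0, hfl] at h0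
  have huinv : u * u⁻¹ = 1 := mul_inv_cancel₀ hu0.ne'
  nlinarith [mul_le_mul_of_nonneg_left h0 hu0.le]

/-- For `0 < u ≤ 1`: `(u-1)²/2 ≤ u - 1 - log u`. -/
lemma kf_ineq_II {u : ℝ} (h0 : 0 < u) (h1 : u ≤ 1) : (u-1)^2/2 ≤ u - 1 - Real.log u := by
  set g : ℝ → ℝ := fun t => Real.exp t - 1 - t - (Real.exp t - 1)^2/2 with hg
  have hd : ∀ t : ℝ, HasDerivAt g (-(Real.exp t - 1)^2) t := by
    intro t
    have h2 : HasDerivAt (fun t : ℝ => (Real.exp t - 1)^2) (2*(Real.exp t - 1)*Real.exp t) t := by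
      simpa [Pi.pow_def] using ((Real.hasDerivAt_exp t).sub_const 1).pow 2
    have h3 := ((((Real.hasDerivAt_exp t).sub_const 1).sub (hasDerivAt_id t)).sub (h2.div_const 2))
    exact h3.congr_deriv (by ring)
  have hanti : Antitone g := by
    apply antitone_of_deriv_nonpos (fun t => (hd t).differentiableAt)
    intro t
    rw [(hd t).deriv]
    nlinarith [sq_nonneg (Real.exp t - 1)]
  have h4 : g 0 ≤ g (Real.log u) := hanti (Real.log_nonpos h0.le h1)
  have hf0 : g 0 = 0 := by simp [hg]
  have hfl : g (Real.log u) = u - 1 - Real.log u - (u-1)^2/2 := by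
    simp [hg, Real.exp_log h0]
  rw [hf0, hfl] at h4
  linarith

/-- For `1 ≤ u`: `u - 1 - (u-1)²/2 ≤ log u`. -/
lemma kf_ineq_III {u : ℝ} (h : 1 ≤ u) : u - 1 - (u-1)^2/2 ≤ Real.log u := by
  have hu0 : (0:ℝ) < u := lt_of_lt_of_le one_pos h
  set g : ℝ → ℝ := fun t => t - (Real.exp t - 1) + (Real.exp t - 1)^2/2 with hg
  have hd : ∀ t : ℝ, HasDerivAt g ((Real.exp t - 1)^2) t := by
    intro t
    have h2 : HasDerivAt (fun t : ℝ => (Real.exp t - 1)^2) (2*(Real.exp t - 1)*Real.exp t) t := by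
      simpa [Pi.pow_def] using ((Real.hasDerivAt_exp t).sub_const 1).pow 2
    have h3 := (((hasDerivAt_id t).sub ((Real.hasDerivAt_exp t).sub_const 1)).add (h2.div_const 2))
    exact h3.congr_deriv (by ring)
  have hmono : Monotone g := by
    apply monotone_of_deriv_nonneg (fun t => (hd t).differentiableAt)
    intro t
    rw [(hd t).deriv]
    positivity
  have h4 : g 0 ≤ g (Real.log u) := hmono (Real.log_nonneg h)
  have hf0 : g 0 = 0 := by simp [hg]
  have hfl : g (Real.log u) = Real.log u - (u - 1) + (u-1)^2/2 := by
    simp [hg, Real.exp_log hu0]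
  rw [hf0, hfl] at h4
  linarith

lemma kf_P1u {u g : ℝ} (hu : 0 < u) (hg0 : 0 < g) (hg : g ≤ 1/2) (hgu : g*u ≤ 1/2) :
    g*(u-1)^2 ≤ (u - 1) - Real.log u := by
  rcases le_or_gt u 1 with h1 | h1
  · have h2 := kf_ineq_II hu h1
    have h3 := mul_le_mul_of_nonneg_right hg (sq_nonneg (u-1))
    linarith
  · have h2 := kf_ineq_I h1.le
    have h3 := mul_le_mul_of_nonneg_right hgu (sq_nonneg (u-1))
    nlinarith [hu, h2, h3]

lemma kf_P2u {u a : ℝ} (hu : 0 < u) (ha : 1/2 ≤ a) (hau : 1/2 ≤ a*u) :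
    (u - 1) - a*(u-1)^2 ≤ Real.log u := by
  rcases le_or_gt 1 u with h1 | h1
  · have h2 := kf_ineq_III h1
    have h3 := mul_le_mul_of_nonneg_right ha (sq_nonneg (u-1))
    linarith
  · have h2 : u ≤ 1 := h1.le
    have hIb : u^2 - 1 ≤ 2*u*Real.log u := by
      have hinv : (1:ℝ) ≤ u⁻¹ := one_le_inv_iff₀.mpr ⟨hu, h2⟩
      have h4 := kf_ineq_I hinv
      have h5 : Real.log u⁻¹ = -Real.log u := Real.log_inv u
      rw [h5] at h4
      have h6 := mul_le_mul_of_nonneg_left h4 (mul_pos hu hu).le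
      have e1 : u*u*(2*u⁻¹*(-Real.log u)) = -2*u*Real.log u := by
        field_simp <;> ring
      have e2 : u*u*((u⁻¹)^2 - 1) = 1 - u^2 := by
        field_simp <;> ring
      nlinarith [h6]
    have h3 := mul_le_mul_of_nonneg_right hau (sq_nonneg (u-1))
    nlinarith [hu, hIb, h3]

lemma kf_P1' {t g : ℝ} (ht0 : 0 < t) (ht : t ≤ 1/2) (hg0 : 0 < g) (hg : g ≤ 1/2) :
    (t - g)^2 ≤ (t - g) - g*(Real.log t - Real.log g) := by
  have hu : 0 < t/g := div_pos ht0 hg0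
  have hgt : g * (t/g) = t := by field_simp
  have h := kf_P1u hu hg0 hg (by rw [hgt]; exact ht)
  rw [Real.log_div ht0.ne' hg0.ne'] at h
  have h2 := mul_le_mul_of_nonneg_left h hg0.le
  have e1 : g*(g*(t/g-1)^2) = (t-g)^2 := by field_simp <;> ring
  have e2 : g*((t/g-1) - (Real.log t - Real.log g)) = (t - g) - g*(Real.log t - Real.log g) := by
    field_simp <;> ring
  rw [e1, e2] at h2
  exact h2

lemma kf_P2' {y a : ℝ} (hy : 1/2 ≤ y) (ha : 1/2 ≤ a) :
    (y - a) - (y-a)^2 ≤ a*(Real.log y - Real.log a) := by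
  have ha0 : (0:ℝ) < a := lt_of_lt_of_le (by norm_num) ha
  have hy0 : (0:ℝ) < y := lt_of_lt_of_le (by norm_num) hy
  have hu : 0 < y/a := div_pos hy0 ha0
  have hay : a * (y/a) = y := by field_simp
  have h := kf_P2u hu ha (by rw [hay]; exact hy)
  rw [Real.log_div hy0.ne' ha0.ne'] at h
  have h2 := mul_le_mul_of_nonneg_left h ha0.le
  have e1 : a*((y/a - 1) - a*(y/a-1)^2) = (y - a) - (y-a)^2 := by field_simp <;> ring
  rw [e1] at h2
  exact h2

/-- Alzer's additive Ky Fan inequality: `A'_n - G'_n ≤ A_n - G_n`. -/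
theorem kyFan_additive_arith_geom (n : ℕ) (x μ : Fin n → ℝ)
    (hx : ∀ i, x i ∈ Set.Ioc (0:ℝ) (1/2)) (hμ : ∀ i, 0 ≤ μ i)
    (hsum : ∑ i, μ i = 1)
    (A G A' G' : ℝ)
    (hA : A = ∑ i, μ i * x i) (hG : G = ∏ i, x i ^ μ i)
    (hA' : A' = ∑ i, μ i * (1 - x i)) (hG' : G' = ∏ i, (1 - x i) ^ μ i) :
    A' - G' ≤ A - G := by
  have hx0 : ∀ i, 0 < x i := fun i => (hx i).1
  have hxh : ∀ i, x i ≤ 1/2 := fun i => (hx i).2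
  have hy0 : ∀ i, (0:ℝ) < 1 - x i := fun i => by linarith [hxh i]
  have hyh : ∀ i, (1:ℝ)/2 ≤ 1 - x i := fun i => by linarith [hxh i]
  have hG0 : 0 < G := by
    rw [hG]; exact Finset.prod_pos fun i _ => Real.rpow_pos_of_pos (hx0 i) _
  have hG'0 : 0 < G' := by
    rw [hG']; exact Finset.prod_pos fun i _ => Real.rpow_pos_of_pos (hy0 i) _
  have hGhalf : G ≤ 1/2 := by
    rw [hG]
    calc ∏ i, x i ^ μ i ≤ ∏ i, ((1:ℝ)/2) ^ μ i := by
          apply Finset.prod_le_prod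
          · exact fun i _ => (Real.rpow_pos_of_pos (hx0 i) _).le
          · exact fun i _ => Real.rpow_le_rpow (hx0 i).le (hxh i) (hμ i)
      _ = ((1:ℝ)/2) ^ (∑ i, μ i) := (Real.rpow_sum_of_pos (by norm_num) μ Finset.univ).symm
      _ = 1/2 := by rw [hsum, Real.rpow_one]
  have hAhalf : A ≤ 1/2 := by
    rw [hA]
    calc ∑ i, μ i * x i ≤ ∑ i, μ i * (1/2) := by
          exact Finset.sum_le_sum fun i _ => mul_le_mul_of_nonneg_left (hxh i) (hμ i)
      _ = 1/2 := by rw [← Finset.sum_mul, hsum]; norm_num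
  have hA'eq : A' = 1 - A := by
    rw [hA', hA]
    rw [show ∑ i, μ i * (1 - x i) = ∑ i, (μ i - μ i * x i) from
      Finset.sum_congr rfl fun i _ => by ring]
    rw [Finset.sum_sub_distrib, hsum]
  have hA'h : (1:ℝ)/2 ≤ A' := by rw [hA'eq]; linarith
  have hA'0 : (0:ℝ) < A' := by linarith
  have hlogG : Real.log G = ∑ i, μ i * Real.log (x i) := by
    rw [hG, Real.log_prod (fun i _ => (Real.rpow_pos_of_pos (hx0 i) _).ne')]
    exact Finset.sum_congr rfl fun i _ => Real.log_rpow (hx0 i) _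
  have hlogG' : Real.log G' = ∑ i, μ i * Real.log (1 - x i) := by
    rw [hG', Real.log_prod (fun i _ => (Real.rpow_pos_of_pos (hy0 i) _).ne')]
    exact Finset.sum_congr rfl fun i _ => Real.log_rpow (hy0 i) _
  -- Lower bound: variance ≤ A - G
  have key1 : ∑ i, μ i * ((x i - G) - G*(Real.log (x i) - Real.log G)) = A - G := by
    calc ∑ i, μ i * ((x i - G) - G*(Real.log (x i) - Real.log G))
        = ∑ i, (μ i * x i - G * μ i - G * (μ i * Real.log (x i)) + (G * Real.log G) * μ i) :=
          Finset.sum_congr rfl fun i _ => by ring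
      _ = (∑ i, μ i * x i) - G * (∑ i, μ i) - G * (∑ i, μ i * Real.log (x i))
            + (G * Real.log G) * (∑ i, μ i) := by
          rw [Finset.sum_add_distrib, Finset.sum_sub_distrib, Finset.sum_sub_distrib,
            ← Finset.mul_sum, ← Finset.mul_sum, ← Finset.mul_sum]
      _ = A - G := by rw [hsum, ← hlogG, ← hA]; ring
  have lemA : ∑ i, μ i * (x i - G)^2 ≤ A - G := by
    rw [← key1]
    exact Finset.sum_le_sum fun i _ =>
      mul_le_mul_of_nonneg_left (kf_P1' (hx0 i) (hxh i) hG0 hGhalf) (hμ i)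
  -- recentering: variance about A is at most variance about G
  have hVar : ∑ i, μ i * (x i - A)^2 ≤ ∑ i, μ i * (x i - G)^2 := by
    have expand : ∑ i, (μ i * (x i - G)^2 - μ i * (x i - A)^2) = (A - G)^2 := by
      calc ∑ i, (μ i * (x i - G)^2 - μ i * (x i - A)^2)
          = ∑ i, ((2*(A - G)) * (μ i * x i) - ((A - G)*(A + G)) * μ i) :=
            Finset.sum_congr rfl fun i _ => by ring
        _ = (2*(A - G)) * (∑ i, μ i * x i) - ((A - G)*(A + G)) * (∑ i, μ i) := by
            rw [Finset.sum_sub_distrib, ← Finset.mul_sum, ← Finset.mul_sum]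
        _ = (A - G)^2 := by rw [hsum, ← hA]; ring
    rw [Finset.sum_sub_distrib] at expand
    nlinarith [sq_nonneg (A - G)]
  set V : ℝ := ∑ i, μ i * (x i - A)^2 with hV
  -- Upper bound: A' - G' ≤ V
  have key2 : -V ≤ A' * (Real.log G' - Real.log A') := by
    have h1 : ∑ i, μ i * (((1 - x i) - A') - ((1 - x i) - A')^2)
        ≤ ∑ i, μ i * (A' * (Real.log (1 - x i) - Real.log A')) :=
      Finset.sum_le_sum fun i _ =>
        mul_le_mul_of_nonneg_left (kf_P2' (hyh i) hA'h) (hμ i)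
    have e1 : ∑ i, μ i * (((1 - x i) - A') - ((1 - x i) - A')^2) = -V := by
      calc ∑ i, μ i * (((1 - x i) - A') - ((1 - x i) - A')^2)
          = ∑ i, (μ i * (1 - x i) - A' * μ i - μ i * (x i - (1 - A'))^2) :=
            Finset.sum_congr rfl fun i _ => by ring
        _ = (∑ i, μ i * (1 - x i)) - A' * (∑ i, μ i) - ∑ i, μ i * (x i - (1 - A'))^2 := by
            rw [Finset.sum_sub_distrib, Finset.sum_sub_distrib, ← Finset.mul_sum]
        _ = -V := by
            rw [hsum, ← hA', hV]
            have : (1 - A') = A := by rw [hA'eq]; ring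
            rw [this]; ring
    have e2 : ∑ i, μ i * (A' * (Real.log (1 - x i) - Real.log A')) = A' * (Real.log G' - Real.log A') := by
      calc ∑ i, μ i * (A' * (Real.log (1 - x i) - Real.log A'))
          = ∑ i, (A' * (μ i * Real.log (1 - x i)) - (A' * Real.log A') * μ i) :=
            Finset.sum_congr rfl fun i _ => by ring
        _ = A' * (∑ i, μ i * Real.log (1 - x i)) - (A' * Real.log A') * (∑ i, μ i) := by
            rw [Finset.sum_sub_distrib, ← Finset.mul_sum, ← Finset.mul_sum]
        _ = A' * (Real.log G' - Real.log A') := by rw [hsum, ← hlogG']; ring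
    rw [e1, e2] at h1
    exact h1
  have lemB : A' - V ≤ G' := by
    have h1 : Real.log A' + (-V)/A' ≤ Real.log G' := by
      have h2 : (-V)/A' ≤ Real.log G' - Real.log A' := by
        rw [div_le_iff₀ hA'0]
        calc -V ≤ A' * (Real.log G' - Real.log A') := key2
          _ = (Real.log G' - Real.log A') * A' := by ring
      linarith
    have h3 : Real.exp (Real.log A' + (-V)/A') ≤ Real.exp (Real.log G') := Real.exp_le_exp.mpr h1
    rw [Real.exp_log hG'0, Real.exp_add, Real.exp_log hA'0] at h3
    have h4 : 1 + (-V)/A' ≤ Real.exp ((-V)/A') := by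
      linarith [Real.add_one_le_exp ((-V)/A')]
    have h5 : A' * (1 + (-V)/A') ≤ A' * Real.exp ((-V)/A') :=
      mul_le_mul_of_nonneg_left h4 hA'0.le
    have h6 : A' * (1 + (-V)/A') = A' - V := by field_simp <;> ring
    linarith
  linarith
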